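/- arXiv:2308.12809 — 2 statements merged into one kernel-verified Lean document; each statement's English description precedes it below -/
import Mathlib

section
/- Krawtchouk polynomials satisfy the orthogonality relation: for natural numbers m, n, N with m, n ≤ N and real 0 < p < 1, binom(N,n) · Σ_{X=0}^{N} binom(N,X) p^{X+n} (1-p)^{N-X-n} K_m(X;p,N) K_n(X;p,N) = δ_{m,n}, where K_n(x;p,N) = Σ_{k=0}^{n} [(-n)_k (-x)_k / ((-N)_k k!)] p^{-k}. -/
open Finset

/-- Pochhammer (rising factorial) symbol. -/
noncomputable def poch (a : ℝ) (k : ℕ) : ℝ := ∏ i ∈ Finset.range k, (a + i)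

/-- The Krawtchouk polynomial `K_n(x;p,N) = ₂F₁(-n,-x;-N;1/p)`. -/
noncomputable def kraw (n x N : ℕ) (p : ℝ) : ℝ :=
  ∑ k ∈ Finset.range (n + 1),
    poch (-(n : ℝ)) k * poch (-(x : ℝ)) k /
      (poch (-(N : ℝ)) k * (Nat.factorial k : ℝ)) * (1 / p) ^ k

lemma poch_neg_nat (a k : ℕ) :
    poch (-(a : ℝ)) k = (-1) ^ k * (Nat.factorial k : ℝ) * (a.choose k : ℝ) := by
  induction k with
  | zero => simp [poch]
  | succ k ih =>
    rw [poch, Finset.prod_range_succ, ← poch, ih]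
    rcases lt_or_ge k a with h | h
    · have hc := Nat.choose_succ_right_eq a k
      have hcast : (a.choose (k+1) : ℝ) * (k+1) = (a.choose k : ℝ) * ((a : ℝ) - k) := by
        have : ((a.choose (k+1) * (k+1) : ℕ) : ℝ) = ((a.choose k * (a - k) : ℕ) : ℝ) := by
          exact_mod_cast congrArg (Nat.cast : ℕ → ℝ) hc
        push_cast [Nat.cast_sub h.le] at this
        linarith
      have : (Nat.factorial (k+1) : ℝ) = (k+1) * Nat.factorial k := by
        push_cast [Nat.factorial_succ]; ring
      rw [this, pow_succ]
      linear_combination (-1:ℝ)^k * (Nat.factorial k : ℝ) * hcast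
    · have h1 : a.choose (k+1) = 0 := Nat.choose_eq_zero_of_lt (by omega)
      rcases eq_or_lt_of_le h with rfl | h2
      · simp [h1]
      · have : a.choose k = 0 := Nat.choose_eq_zero_of_lt h2
        simp [h1, this]

lemma kraw_eq (n x N : ℕ) (hn : n ≤ N) (p : ℝ) :
    kraw n x N p =
      ∑ k ∈ Finset.range (n + 1),
        (-1) ^ k * (n.choose k : ℝ) * (x.choose k : ℝ) / (N.choose k : ℝ) * (1 / p) ^ k := by
  unfold kraw
  refine Finset.sum_congr rfl fun k hk => ?_
  rw [Finset.mem_range] at hk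
  have hkN : k ≤ N := by omega
  have hNk : (N.choose k : ℝ) ≠ 0 := by
    exact_mod_cast Nat.choose_pos hkN |>.ne'
  have hfk : (Nat.factorial k : ℝ) ≠ 0 := by exact_mod_cast (Nat.factorial_pos k).ne'
  have hs : ((-1 : ℝ)) ^ k ≠ 0 := by positivity
  rw [poch_neg_nat, poch_neg_nat, poch_neg_nat]
  congr 1
  have hB : (((-1:ℝ)) ^ k * (Nat.factorial k : ℝ) * (N.choose k : ℝ)) * (Nat.factorial k : ℝ) ≠ 0 :=
    mul_ne_zero (mul_ne_zero (mul_ne_zero hs hfk) hNk) hfk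
  rw [div_eq_div_iff hB hNk]
  ring

/-- subset chain identity, valid for all `a` when `c ≤ b`. -/
lemma chain (a b c : ℕ) (hcb : c ≤ b) :
    a.choose b * b.choose c = a.choose c * (a - c).choose (b - c) := by
  rcases le_or_gt b a with h | h
  · exact Nat.choose_mul hcb
  · rw [Nat.choose_eq_zero_of_lt h]
    rcases le_or_gt c a with h2 | h2
    · rw [Nat.choose_eq_zero_of_lt (by omega : a - c < b - c)]
      simp
    · rw [Nat.choose_eq_zero_of_lt h2]
      simp

lemma binom_moment (M s : ℕ) (p : ℝ) :
    ∑ X ∈ Finset.range (M + 1),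
      (M.choose X : ℝ) * (X.choose s : ℝ) * p ^ X * (1 - p) ^ (M - X)
    = (M.choose s : ℝ) * p ^ s := by
  rcases le_or_gt s M with hsM | hsM
  · have hsplit : Finset.range (M + 1) = Finset.Ico 0 (M + 1) := by
      rw [Finset.range_eq_Ico]
    rw [hsplit, ← Finset.sum_Ico_consecutive _ (Nat.zero_le s) (by omega : s ≤ M + 1)]
    have h1 : ∑ X ∈ Finset.Ico 0 s,
        (M.choose X : ℝ) * (X.choose s : ℝ) * p ^ X * (1 - p) ^ (M - X) = 0 := by
      refine Finset.sum_eq_zero fun X hX => ?_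
      rw [Finset.mem_Ico] at hX
      rw [Nat.choose_eq_zero_of_lt hX.2]
      simp
    rw [h1, zero_add, Finset.sum_Ico_eq_sum_range]
    have h2 : M + 1 - s = (M - s) + 1 := by omega
    rw [h2]
    have h3 : ∀ Y ∈ Finset.range ((M - s) + 1),
        (M.choose (s + Y) : ℝ) * ((s + Y).choose s : ℝ) * p ^ (s + Y) * (1 - p) ^ (M - (s + Y))
        = ((M.choose s : ℝ) * p ^ s) * (((M - s).choose Y : ℝ) * p ^ Y * (1 - p) ^ ((M - s) - Y)) := by
      intro Y hY
      rw [Finset.mem_range] at hY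
      have hch : M.choose (s + Y) * (s + Y).choose s = M.choose s * (M - s).choose Y := by
        have := chain M (s + Y) s (Nat.le_add_right s Y)
        simpa using this
      have hsub : M - (s + Y) = (M - s) - Y := by omega
      have hcast : (M.choose (s + Y) : ℝ) * ((s + Y).choose s : ℝ)
          = (M.choose s : ℝ) * ((M - s).choose Y : ℝ) := by exact_mod_cast congrArg (Nat.cast : ℕ → ℝ) hch
      rw [hsub, pow_add]
      linear_combination (p ^ s * p ^ Y * (1 - p) ^ ((M - s) - Y)) * hcast
    rw [Finset.sum_congr rfl h3, ← Finset.mul_sum]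
    have h4 : ∑ Y ∈ Finset.range ((M - s) + 1),
        ((M - s).choose Y : ℝ) * p ^ Y * (1 - p) ^ ((M - s) - Y) = 1 := by
      have h5 : ∑ Y ∈ Finset.range ((M - s) + 1),
          ((M - s).choose Y : ℝ) * p ^ Y * (1 - p) ^ ((M - s) - Y) = (p + (1 - p)) ^ (M - s) := by
        rw [add_pow]
        exact Finset.sum_congr rfl fun Y hY => by ring
      rw [h5]
      norm_num
    rw [h4, mul_one]
  · have h1 : ∀ X ∈ Finset.range (M + 1),
        (M.choose X : ℝ) * (X.choose s : ℝ) * p ^ X * (1 - p) ^ (M - X) = 0 := by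
      intro X hX
      rw [Finset.mem_range] at hX
      rw [Nat.choose_eq_zero_of_lt (by omega : X < s)]
      simp
    rw [Finset.sum_congr rfl h1, Finset.sum_const_zero, Nat.choose_eq_zero_of_lt hsM]
    simp

lemma altL : ∀ (A B c : ℕ), A ≤ B → c ≤ B →
    ∑ t ∈ Finset.range (c + 1), (-1 : ℝ) ^ t * (A.choose t : ℝ) * ((B - t).choose (c - t) : ℝ)
    = ((B - A).choose c : ℝ) := by
  intro A
  induction A with
  | zero =>
    intro B c _ _
    have h : ∀ t ∈ Finset.range (c + 1),
        (-1 : ℝ) ^ t * (Nat.choose 0 t : ℝ) * ((B - t).choose (c - t) : ℝ)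
        = if t = 0 then ((B : ℕ).choose c : ℝ) else 0 := by
      intro t ht
      rcases Nat.eq_zero_or_pos t with rfl | htpos
      · simp
      · rw [Nat.choose_eq_zero_of_lt htpos, if_neg (by omega)]
        simp
    rw [Finset.sum_congr rfl h, Finset.sum_ite_eq' (Finset.range (c + 1)) 0]
    simp
  | succ A ih =>
    intro B c hAB hcB
    rcases Nat.eq_zero_or_pos c with rfl | hcpos
    · simp
    obtain ⟨c', rfl⟩ : ∃ c', c = c' + 1 := ⟨c - 1, by omega⟩
    rw [Finset.sum_range_succ']
    have hf0 : (-1 : ℝ) ^ 0 * ((A + 1).choose 0 : ℝ) * ((B - 0).choose (c' + 1 - 0) : ℝ)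
        = ((B).choose (c' + 1) : ℝ) := by simp
    rw [hf0]
    have hsplit : ∀ t ∈ Finset.range (c' + 1),
        (-1 : ℝ) ^ (t + 1) * ((A + 1).choose (t + 1) : ℝ) * ((B - (t + 1)).choose (c' + 1 - (t + 1)) : ℝ)
        = -((-1 : ℝ) ^ t * (A.choose t : ℝ) * (((B - 1) - t).choose (c' - t) : ℝ))
          + (-1 : ℝ) ^ (t + 1) * (A.choose (t + 1) : ℝ) * ((B - (t + 1)).choose (c' + 1 - (t + 1)) : ℝ) := by
      intro t ht
      have h1 : B - (t + 1) = (B - 1) - t := by omega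
      have h2 : c' + 1 - (t + 1) = c' - t := by omega
      rw [Nat.choose_succ_succ, h1, h2]
      push_cast
      ring
    rw [Finset.sum_congr rfl hsplit, Finset.sum_add_distrib]
    have hIH1 : ∑ t ∈ Finset.range (c' + 1),
        -((-1 : ℝ) ^ t * (A.choose t : ℝ) * (((B - 1) - t).choose (c' - t) : ℝ))
        = -(((B - 1) - A).choose c' : ℝ) := by
      rw [Finset.sum_neg_distrib, ih (B - 1) c' (by omega) (by omega)]
    have hIH2 : ∑ t ∈ Finset.range (c' + 1),
        (-1 : ℝ) ^ (t + 1) * (A.choose (t + 1) : ℝ) * ((B - (t + 1)).choose (c' + 1 - (t + 1)) : ℝ)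
        = ((B - A).choose (c' + 1) : ℝ) - ((B).choose (c' + 1) : ℝ) := by
      have := ih B (c' + 1) (by omega) hcB
      rw [Finset.sum_range_succ'] at this
      have h0 : (-1 : ℝ) ^ 0 * (A.choose 0 : ℝ) * ((B - 0).choose (c' + 1 - 0) : ℝ)
          = ((B).choose (c' + 1) : ℝ) := by simp
      rw [h0] at this
      linarith
    rw [hIH1, hIH2]
    have hpascal : (B - A).choose (c' + 1) = (B - (A + 1)).choose c' + (B - (A + 1)).choose (c' + 1) := by
      have hBA : B - A = (B - (A + 1)) + 1 := by omega
      rw [hBA, Nat.choose_succ_succ]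
    have hBA1 : (B - 1) - A = B - (A + 1) := by omega
    rw [hBA1, hpascal]
    push_cast
    ring

lemma vandermonde_range (j Y k : ℕ) :
    ((j + Y).choose k : ℝ) = ∑ i ∈ Finset.range (k + 1), (j.choose i : ℝ) * (Y.choose (k - i) : ℝ) := by
  have := Nat.add_choose_eq j Y k
  rw [Finset.Nat.sum_antidiagonal_eq_sum_range_succ_mk] at this
  exact_mod_cast congrArg (Nat.cast : ℕ → ℝ) this

lemma inner_moment (N j k : ℕ) (hj : j ≤ N) (p : ℝ) :
    ∑ X ∈ Finset.range (N + 1),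
      (N.choose X : ℝ) * p ^ X * (1 - p) ^ (N - X) * (X.choose j : ℝ) * (X.choose k : ℝ)
    = (N.choose j : ℝ) * p ^ j *
        ∑ i ∈ Finset.range (k + 1), (j.choose i : ℝ) * ((N - j).choose (k - i) : ℝ) * p ^ (k - i) := by
  rw [show Finset.range (N + 1) = Finset.Ico 0 (N + 1) from by rw [Finset.range_eq_Ico],
    ← Finset.sum_Ico_consecutive _ (Nat.zero_le j) (by omega : j ≤ N + 1)]
  have h1 : ∑ X ∈ Finset.Ico 0 j,
      (N.choose X : ℝ) * p ^ X * (1 - p) ^ (N - X) * (X.choose j : ℝ) * (X.choose k : ℝ) = 0 := by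
    refine Finset.sum_eq_zero fun X hX => ?_
    rw [Finset.mem_Ico] at hX
    rw [Nat.choose_eq_zero_of_lt hX.2]
    simp
  rw [h1, zero_add, Finset.sum_Ico_eq_sum_range]
  have h2 : N + 1 - j = (N - j) + 1 := by omega
  rw [h2]
  have h3 : ∀ Y ∈ Finset.range ((N - j) + 1),
      (N.choose (j + Y) : ℝ) * p ^ (j + Y) * (1 - p) ^ (N - (j + Y)) * ((j + Y).choose j : ℝ)
        * ((j + Y).choose k : ℝ)
      = (N.choose j : ℝ) * p ^ j * ∑ i ∈ Finset.range (k + 1),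
          (j.choose i : ℝ) * (((N - j).choose Y : ℝ) * (Y.choose (k - i) : ℝ) * p ^ Y * (1 - p) ^ ((N - j) - Y)) := by
    intro Y hY
    rw [Finset.mem_range] at hY
    have hch : N.choose (j + Y) * (j + Y).choose j = N.choose j * (N - j).choose Y := by
      have := chain N (j + Y) j (Nat.le_add_right j Y)
      simpa using this
    have hcast : (N.choose (j + Y) : ℝ) * ((j + Y).choose j : ℝ)
        = (N.choose j : ℝ) * ((N - j).choose Y : ℝ) := by exact_mod_cast congrArg (Nat.cast : ℕ → ℝ) hch
    have hsub : N - (j + Y) = (N - j) - Y := by omega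
    rw [hsub, vandermonde_range j Y k, Finset.mul_sum, Finset.mul_sum]
    refine Finset.sum_congr rfl fun i hi => ?_
    rw [pow_add]
    linear_combination (p ^ j * p ^ Y * (1 - p) ^ ((N - j) - Y) * (j.choose i : ℝ) * (Y.choose (k - i) : ℝ)) * hcast
  rw [Finset.sum_congr rfl h3, ← Finset.mul_sum, Finset.sum_comm]
  congr 1
  refine Finset.sum_congr rfl fun i hi => ?_
  rw [← Finset.mul_sum]
  have h4 : ∑ Y ∈ Finset.range ((N - j) + 1),
      ((N - j).choose Y : ℝ) * (Y.choose (k - i) : ℝ) * p ^ Y * (1 - p) ^ ((N - j) - Y)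
      = ((N - j).choose (k - i) : ℝ) * p ^ (k - i) := binom_moment (N - j) (k - i) p
  rw [h4]
  ring

lemma double_sum (N n j : ℕ) (hn : n ≤ N) (hj : j ≤ N) (x : ℝ) :
    ∑ k ∈ Finset.range (n + 1), ∑ i ∈ Finset.range (k + 1),
      (-1 : ℝ) ^ k * ((N - k).choose (n - k) : ℝ) * (j.choose i : ℝ) * ((N - j).choose (k - i) : ℝ) * x ^ i
    = (j.choose n : ℝ) * ∑ i ∈ Finset.range (n + 1), (n.choose i : ℝ) * (-x) ^ i := by
  have hsw := Finset.sum_Ico_Ico_comm 0 (n + 1) (fun i k =>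
    (-1 : ℝ) ^ k * ((N - k).choose (n - k) : ℝ) * (j.choose i : ℝ) * ((N - j).choose (k - i) : ℝ) * x ^ i)
  simp only [show Finset.Ico 0 (n + 1) = Finset.range (n + 1) from by rw [Finset.range_eq_Ico],
    show ∀ a : ℕ, Finset.Ico 0 (a + 1) = Finset.range (a + 1) from fun a => by rw [Finset.range_eq_Ico]] at hsw
  rw [← hsw, Finset.mul_sum]
  refine Finset.sum_congr rfl fun i hi => ?_
  rw [Finset.mem_range] at hi
  rw [Finset.sum_Ico_eq_sum_range]
  have hni : n + 1 - i = (n - i) + 1 := by omega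
  rw [hni]
  rcases le_or_gt i j with hij | hij
  · have h5 : ∀ t ∈ Finset.range ((n - i) + 1),
        (-1 : ℝ) ^ (i + t) * ((N - (i + t)).choose (n - (i + t)) : ℝ) * (j.choose i : ℝ)
          * ((N - j).choose ((i + t) - i) : ℝ) * x ^ i
        = ((-1 : ℝ) ^ i * (j.choose i : ℝ) * x ^ i) *
            ((-1 : ℝ) ^ t * ((N - j).choose t : ℝ) * (((N - i) - t).choose ((n - i) - t) : ℝ)) := by
      intro t ht
      have e1 : N - (i + t) = (N - i) - t := by omega
      have e2 : n - (i + t) = (n - i) - t := by omega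
      have e3 : (i + t) - i = t := by omega
      rw [e1, e2, e3, pow_add]
      ring
    rw [Finset.sum_congr rfl h5, ← Finset.mul_sum,
      altL (N - j) (N - i) (n - i) (by omega) (by omega)]
    have e4 : (N - i) - (N - j) = j - i := by omega
    rw [e4]
    have hchain : (j.choose n : ℝ) * (n.choose i : ℝ) = (j.choose i : ℝ) * ((j - i).choose (n - i) : ℝ) := by
      exact_mod_cast congrArg (Nat.cast : ℕ → ℝ) (chain j n i (by omega))
    calc (-1 : ℝ) ^ i * (j.choose i : ℝ) * x ^ i * ((j - i).choose (n - i) : ℝ)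
        = ((j.choose i : ℝ) * ((j - i).choose (n - i) : ℝ)) * ((-1) ^ i * x ^ i) := by ring
      _ = ((j.choose n : ℝ) * (n.choose i : ℝ)) * ((-1) ^ i * x ^ i) := by rw [← hchain]
      _ = (j.choose n : ℝ) * ((n.choose i : ℝ) * (-x) ^ i) := by rw [neg_pow]; ring
  · have h6 : ∀ t ∈ Finset.range ((n - i) + 1),
        (-1 : ℝ) ^ (i + t) * ((N - (i + t)).choose (n - (i + t)) : ℝ) * (j.choose i : ℝ)
          * ((N - j).choose ((i + t) - i) : ℝ) * x ^ i = 0 := by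
      intro t ht
      rw [Nat.choose_eq_zero_of_lt hij]
      simp
    rw [Finset.sum_congr rfl h6, Finset.sum_const_zero]
    rw [Nat.choose_eq_zero_of_lt (by omega : j < n)]
    simp

lemma altJ (m n : ℕ) :
    ∑ j ∈ Finset.range (m + 1), (-1 : ℝ) ^ j * (m.choose j : ℝ) * (j.choose n : ℝ)
    = if m = n then (-1 : ℝ) ^ n else 0 := by
  rcases lt_or_ge m n with hmn | hmn
  · rw [if_neg (by omega)]
    refine Finset.sum_eq_zero fun j hj => ?_
    rw [Finset.mem_range] at hj
    rw [Nat.choose_eq_zero_of_lt (by omega : j < n)]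
    simp
  · rw [show Finset.range (m + 1) = Finset.Ico 0 (m + 1) from by rw [Finset.range_eq_Ico],
      ← Finset.sum_Ico_consecutive _ (Nat.zero_le n) (by omega : n ≤ m + 1)]
    have h1 : ∑ j ∈ Finset.Ico 0 n, (-1 : ℝ) ^ j * (m.choose j : ℝ) * (j.choose n : ℝ) = 0 := by
      refine Finset.sum_eq_zero fun j hj => ?_
      rw [Finset.mem_Ico] at hj
      rw [Nat.choose_eq_zero_of_lt hj.2]
      simp
    rw [h1, zero_add, Finset.sum_Ico_eq_sum_range]
    have h2 : m + 1 - n = (m - n) + 1 := by omega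
    rw [h2]
    have h3 : ∀ s ∈ Finset.range ((m - n) + 1),
        (-1 : ℝ) ^ (n + s) * (m.choose (n + s) : ℝ) * ((n + s).choose n : ℝ)
        = ((-1 : ℝ) ^ n * (m.choose n : ℝ)) * ((-1) ^ s * ((m - n).choose s : ℝ) * 1 ^ ((m - n) - s)) := by
      intro s hs
      have hch : m.choose (n + s) * (n + s).choose n = m.choose n * (m - n).choose s := by
        have := chain m (n + s) n (Nat.le_add_right n s)
        simpa using this
      have hcast : (m.choose (n + s) : ℝ) * ((n + s).choose n : ℝ)
          = (m.choose n : ℝ) * ((m - n).choose s : ℝ) := by exact_mod_cast congrArg (Nat.cast : ℕ → ℝ) hch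
      rw [pow_add]
      linear_combination ((-1 : ℝ) ^ n * (-1) ^ s) * hcast
    rw [Finset.sum_congr rfl h3, ← Finset.mul_sum]
    have h4 : ∑ s ∈ Finset.range ((m - n) + 1),
        (-1 : ℝ) ^ s * ((m - n).choose s : ℝ) * 1 ^ ((m - n) - s) = ((-1) + 1 : ℝ) ^ (m - n) := by
      rw [add_pow]
      exact Finset.sum_congr rfl fun s hs => by ring
    rw [h4]
    have : ((-1) + 1 : ℝ) = 0 := by norm_num
    rw [this]
    rcases Nat.eq_zero_or_pos (m - n) with h5 | h5
    · rw [h5, pow_zero, if_pos (by omega)]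
      have : m = n := by omega
      subst this
      simp
    · rw [zero_pow (by omega), if_neg (by omega)]
      simp

lemma key (m n N : ℕ) (hm : m ≤ N) (hn : n ≤ N) (p : ℝ) (hp : p ≠ 0) :
    ∑ X ∈ Finset.range (N + 1),
      (N.choose X : ℝ) * p ^ X * (1 - p) ^ (N - X) * kraw m X N p * kraw n X N p
    = (if m = n then ((1 - p) / p) ^ n / (N.choose n : ℝ) else 0) := by
  have hCNn : (N.choose n : ℝ) ≠ 0 := by exact_mod_cast (Nat.choose_pos hn).ne'
  have hone : ∀ a : ℕ, (1 / p) ^ a * p ^ a = 1 := fun a => by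
    rw [one_div, inv_pow, inv_mul_cancel₀ (pow_ne_zero a hp)]
  have e2 : ∀ X ∈ Finset.range (N + 1),
      (N.choose X : ℝ) * p ^ X * (1 - p) ^ (N - X) * kraw m X N p * kraw n X N p
      = ∑ j ∈ Finset.range (m + 1), ∑ k ∈ Finset.range (n + 1),
          (((-1 : ℝ) ^ j * (m.choose j : ℝ) / (N.choose j : ℝ) * (1 / p) ^ j) *
            ((-1 : ℝ) ^ k * (n.choose k : ℝ) / (N.choose k : ℝ) * (1 / p) ^ k)) *
          ((N.choose X : ℝ) * p ^ X * (1 - p) ^ (N - X) * (X.choose j : ℝ) * (X.choose k : ℝ)) := by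
    intro X _
    rw [mul_assoc, kraw_eq m X N hm p, kraw_eq n X N hn p, Finset.sum_mul_sum, Finset.mul_sum]
    refine Finset.sum_congr rfl fun j _ => ?_
    rw [Finset.mul_sum]
    refine Finset.sum_congr rfl fun k _ => ?_
    ring
  rw [Finset.sum_congr rfl e2, Finset.sum_comm]
  have e3 : ∀ j ∈ Finset.range (m + 1),
      (∑ X ∈ Finset.range (N + 1), ∑ k ∈ Finset.range (n + 1),
          (((-1 : ℝ) ^ j * (m.choose j : ℝ) / (N.choose j : ℝ) * (1 / p) ^ j) *
            ((-1 : ℝ) ^ k * (n.choose k : ℝ) / (N.choose k : ℝ) * (1 / p) ^ k)) *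
          ((N.choose X : ℝ) * p ^ X * (1 - p) ^ (N - X) * (X.choose j : ℝ) * (X.choose k : ℝ)))
      = (1 / (N.choose n : ℝ)) * ((-1 : ℝ) ^ j * (m.choose j : ℝ)) *
          ∑ k ∈ Finset.range (n + 1), ∑ i ∈ Finset.range (k + 1),
            (-1 : ℝ) ^ k * (((N - k).choose (n - k) : ℝ)) * (j.choose i : ℝ) *
              ((N - j).choose (k - i) : ℝ) * (1 / p) ^ i := by
    intro j hj
    rw [Finset.mem_range] at hj
    have hjN : j ≤ N := by omega
    have hCNj : (N.choose j : ℝ) ≠ 0 := by exact_mod_cast (Nat.choose_pos hjN).ne'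
    rw [Finset.sum_comm, Finset.mul_sum]
    refine Finset.sum_congr rfl fun k hk => ?_
    rw [Finset.mem_range] at hk
    have hkn : k ≤ n := by omega
    have hCNk : (N.choose k : ℝ) ≠ 0 := by exact_mod_cast (Nat.choose_pos (by omega : k ≤ N)).ne'
    have hch : (N.choose n : ℝ) * (n.choose k : ℝ)
        = (N.choose k : ℝ) * ((N - k).choose (n - k) : ℝ) := by
      exact_mod_cast congrArg (Nat.cast : ℕ → ℝ) (chain N n k hkn)
    have e4 : ∑ X ∈ Finset.range (N + 1),
        (((-1 : ℝ) ^ j * (m.choose j : ℝ) / (N.choose j : ℝ) * (1 / p) ^ j) *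
            ((-1 : ℝ) ^ k * (n.choose k : ℝ) / (N.choose k : ℝ) * (1 / p) ^ k)) *
          ((N.choose X : ℝ) * p ^ X * (1 - p) ^ (N - X) * (X.choose j : ℝ) * (X.choose k : ℝ))
        = (((-1 : ℝ) ^ j * (m.choose j : ℝ) / (N.choose j : ℝ) * (1 / p) ^ j) *
            ((-1 : ℝ) ^ k * (n.choose k : ℝ) / (N.choose k : ℝ) * (1 / p) ^ k)) *
          ∑ X ∈ Finset.range (N + 1),
            (N.choose X : ℝ) * p ^ X * (1 - p) ^ (N - X) * (X.choose j : ℝ) * (X.choose k : ℝ) :=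
      (Finset.mul_sum _ _ _).symm
    rw [e4, inner_moment N j k hjN p]
    simp only [Finset.mul_sum]
    refine Finset.sum_congr rfl fun i hi => ?_
    rw [Finset.mem_range] at hi
    have hik : i ≤ k := by omega
    have h2 : (1 / p) ^ k * p ^ (k - i) = (1 / p) ^ i := by
      have e : k - i + i = k := by omega
      calc (1 / p) ^ k * p ^ (k - i)
          = ((1 / p) ^ (k - i) * (1 / p) ^ i) * p ^ (k - i) := by rw [← pow_add, e]
        _ = ((1 / p) ^ (k - i) * p ^ (k - i)) * (1 / p) ^ i := by ring
        _ = (1 / p) ^ i := by rw [hone (k - i), one_mul]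
    have hpw : p ^ (k - i) * p ^ i = p ^ k := by rw [← pow_add]; congr 1; omega
    have hCn_inv : (n.choose k : ℝ) / (N.choose k : ℝ) = ((N - k).choose (n - k) : ℝ) / (N.choose n : ℝ) := by
      rw [div_eq_div_iff hCNk hCNn]; linear_combination hch
    have hj1 : (m.choose j : ℝ) / (N.choose j : ℝ) * (N.choose j : ℝ) = m.choose j := div_mul_cancel₀ _ hCNj
    calc _ = ((-1 : ℝ) ^ j * ((m.choose j : ℝ) / (N.choose j : ℝ) * (N.choose j : ℝ)) * ((1 / p) ^ j * p ^ j)) *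
            ((-1 : ℝ) ^ k * ((n.choose k : ℝ) / (N.choose k : ℝ)) * ((1 / p) ^ k * p ^ (k - i))) *
            ((j.choose i : ℝ) * ((N - j).choose (k - i) : ℝ)) := by ring
      _ = _ := by rw [hj1, hone j, h2, hCn_inv]; ring
  rw [Finset.sum_congr rfl e3]
  have e5 : ∀ j ∈ Finset.range (m + 1),
      (1 / (N.choose n : ℝ)) * ((-1 : ℝ) ^ j * (m.choose j : ℝ)) *
          ∑ k ∈ Finset.range (n + 1), ∑ i ∈ Finset.range (k + 1),
            (-1 : ℝ) ^ k * (((N - k).choose (n - k) : ℝ)) * (j.choose i : ℝ) *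
              ((N - j).choose (k - i) : ℝ) * (1 / p) ^ i
      = ((1 / (N.choose n : ℝ)) * ((1 : ℝ) - 1 / p) ^ n) *
          ((-1 : ℝ) ^ j * (m.choose j : ℝ) * (j.choose n : ℝ)) := by
    intro j hj
    rw [Finset.mem_range] at hj
    rw [double_sum N n j hn (by omega) (1 / p)]
    have hP : ∑ i ∈ Finset.range (n + 1), (n.choose i : ℝ) * (-(1 / p)) ^ i
        = ((1 : ℝ) - 1 / p) ^ n := by
      have := add_pow (-(1 / p)) (1 : ℝ) n
      rw [show (-(1 / p) + 1 : ℝ) = 1 - 1 / p by ring] at this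
      rw [this]
      exact Finset.sum_congr rfl fun i hi => by ring
    rw [hP]
    ring
  rw [Finset.sum_congr rfl e5, ← Finset.mul_sum, altJ m n]
  rcases eq_or_ne m n with rfl | hne
  · rw [if_pos rfl, if_pos rfl]
    have h7 : ((1 : ℝ) - 1 / p) ^ m * (-1 : ℝ) ^ m = ((1 - p) / p) ^ m := by
      rw [← mul_pow]
      congr 1
      field_simp
      ring
    rw [mul_assoc, h7, one_div, inv_mul_eq_div]
  · rw [if_neg hne, if_neg hne, mul_zero]

/-- Orthogonality of the Krawtchouk polynomials. -/
theorem krawtchouk_orthogonality (m n N : ℕ) (hm : m ≤ N) (hn : n ≤ N)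
    (p : ℝ) (hp0 : 0 < p) (hp1 : p < 1) :
    (N.choose n : ℝ) *
      ∑ X ∈ Finset.range (N + 1),
        (N.choose X : ℝ) * p ^ ((X : ℝ) + n) * (1 - p) ^ ((N : ℝ) - X - n) *
          kraw m X N p * kraw n X N p
    = if m = n then 1 else 0 := by
  have hq : (0 : ℝ) < 1 - p := by linarith
  have hp : p ≠ 0 := ne_of_gt hp0
  have hqne : (1 - p) ≠ 0 := ne_of_gt hq
  have hCNn : (N.choose n : ℝ) ≠ 0 := by exact_mod_cast (Nat.choose_pos hn).ne'
  have e1 : ∀ X ∈ Finset.range (N + 1),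
      (N.choose X : ℝ) * p ^ ((X : ℝ) + n) * (1 - p) ^ ((N : ℝ) - X - n) *
          kraw m X N p * kraw n X N p
      = (p ^ n / (1 - p) ^ n) *
          ((N.choose X : ℝ) * p ^ X * (1 - p) ^ (N - X) * kraw m X N p * kraw n X N p) := by
    intro X hX
    rw [Finset.mem_range] at hX
    have hXN : X ≤ N := by omega
    have h2 : p ^ ((X : ℝ) + n) = p ^ X * p ^ n := by
      rw [show ((X : ℝ) + n) = ((X + n : ℕ) : ℝ) by push_cast; ring, Real.rpow_natCast, pow_add]
    have h3 : (1 - p) ^ ((N : ℝ) - X - n) = (1 - p) ^ (N - X) / (1 - p) ^ n := by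
      rw [show ((N : ℝ) - X - n) = (((N - X : ℕ) : ℝ)) - ((n : ℕ) : ℝ) by
          rw [Nat.cast_sub hXN],
        Real.rpow_sub hq, Real.rpow_natCast, Real.rpow_natCast]
    rw [h2, h3]
    ring
  have e6 : ∑ X ∈ Finset.range (N + 1),
      (p ^ n / (1 - p) ^ n) *
        ((N.choose X : ℝ) * p ^ X * (1 - p) ^ (N - X) * kraw m X N p * kraw n X N p)
      = (p ^ n / (1 - p) ^ n) *
          ∑ X ∈ Finset.range (N + 1),
            (N.choose X : ℝ) * p ^ X * (1 - p) ^ (N - X) * kraw m X N p * kraw n X N p :=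
    (Finset.mul_sum _ _ _).symm
  rw [Finset.sum_congr rfl e1, e6, key m n N hm hn p hp]
  rcases eq_or_ne m n with rfl | hne
  · rw [if_pos rfl, if_pos rfl]
    rw [div_pow]
    field_simp
  · rw [if_neg hne, if_neg hne]
    ring
end

section
/- The four-term Racah mixed recurrence-difference relation: 0 = [n/(2n+α+β)] R̃_{n-1}(x;α,β,γ,δ) + [(n+α+β)/(2n+α+β)] R̃_n(x;α,β,γ,δ) - [x/(2x+γ+δ+1)] R̃_n(x-1;α,β-1,γ,δ+1) - [(x+γ+δ+1)/(2x+γ+δ+1)] R̃_n(x;α,β-1,γ,δ+1), where R̃_n(x;α,β,γ,δ) = ₄F₃(-n, n+α+β+1, -x, x+γ+δ+1; α+1, β+δ+1, γ+1; 1) is a terminating hypergeometric sum. -/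
open Finset

/-- The Racah polynomial
`R̃_n(x;α,β,γ,δ) = ₄F₃(-n, n+α+β+1, -x, x+γ+δ+1; α+1, β+δ+1, γ+1; 1)`. -/
noncomputable def racah (n : ℕ) (x α β γ δ : ℝ) : ℝ :=
  ∑ k ∈ Finset.range (n + 1),
    poch (-(n : ℝ)) k * poch ((n : ℝ) + α + β + 1) k * poch (-x) k *
        poch (x + γ + δ + 1) k /
      (poch (α + 1) k * poch (β + δ + 1) k * poch (γ + 1) k * (Nat.factorial k : ℝ))

lemma poch_succ (a : ℝ) (k : ℕ) : poch a (k + 1) = poch a k * (a + k) := by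
  simp [poch, Finset.prod_range_succ]

lemma poch_shift (a : ℝ) (k : ℕ) : poch a (k + 1) = a * poch (a + 1) k := by
  rw [poch, Finset.prod_range_succ']
  simp only [Nat.cast_zero, add_zero]
  rw [mul_comm]
  congr 1
  unfold poch
  apply Finset.prod_congr rfl
  intro i _
  push_cast
  ring

lemma poch_key (a : ℝ) (k : ℕ) : a * poch (a + 1) k = poch a k * (a + k) := by
  rw [← poch_shift, poch_succ]

lemma poch_neg_nat_s19 (n : ℕ) : poch (-(n : ℝ)) (n + 1) = 0 := by
  unfold poch
  apply Finset.prod_eq_zero (Finset.self_mem_range_succ n)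
  simp

lemma racah_pred (n : ℕ) (x α β γ δ : ℝ) :
    racah (n - 1) x α β γ δ =
      ∑ k ∈ Finset.range (n + 1),
        poch (1 - (n : ℝ)) k * poch ((n : ℝ) + α + β) k * poch (-x) k *
            poch (x + γ + δ + 1) k /
          (poch (α + 1) k * poch (β + δ + 1) k * poch (γ + 1) k * (Nat.factorial k : ℝ)) := by
  cases n with
  | zero => simp [racah, poch]
  | succ m =>
      rw [Finset.sum_range_succ]
      have h0 : poch (1 - ((m + 1 : ℕ) : ℝ)) (m + 1) = 0 := by
        have h : (1 - ((m + 1 : ℕ) : ℝ)) = -(m : ℝ) := by push_cast; ring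
        rw [h]; exact poch_neg_nat_s19 m
      rw [h0]
      simp only [zero_mul, mul_zero, zero_div, add_zero]
      show racah m x α β γ δ = _
      unfold racah
      apply Finset.sum_congr rfl
      intro k _
      rw [show -(m : ℝ) = 1 - ((m + 1 : ℕ) : ℝ) from by push_cast; ring,
        show (m : ℝ) + α + β + 1 = ((m + 1 : ℕ) : ℝ) + α + β from by push_cast; ring]

lemma racah_shift3 (n : ℕ) (x α β γ δ : ℝ) :
    racah n (x - 1) α (β - 1) γ (δ + 1) =
      ∑ k ∈ Finset.range (n + 1),
        poch (-(n : ℝ)) k * poch ((n : ℝ) + α + β) k * poch (1 - x) k *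
            poch (x + γ + δ + 1) k /
          (poch (α + 1) k * poch (β + δ + 1) k * poch (γ + 1) k * (Nat.factorial k : ℝ)) := by
  unfold racah
  apply Finset.sum_congr rfl
  intro k _
  rw [show (n : ℝ) + α + (β - 1) + 1 = (n : ℝ) + α + β from by ring,
    show -(x - 1) = 1 - x from by ring,
    show x - 1 + γ + (δ + 1) + 1 = x + γ + δ + 1 from by ring,
    show β - 1 + (δ + 1) + 1 = β + δ + 1 from by ring]

lemma racah_shift4 (n : ℕ) (x α β γ δ : ℝ) :
    racah n x α (β - 1) γ (δ + 1) =
      ∑ k ∈ Finset.range (n + 1),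
        poch (-(n : ℝ)) k * poch ((n : ℝ) + α + β) k * poch (-x) k *
            poch (x + γ + δ + 2) k /
          (poch (α + 1) k * poch (β + δ + 1) k * poch (γ + 1) k * (Nat.factorial k : ℝ)) := by
  unfold racah
  apply Finset.sum_congr rfl
  intro k _
  rw [show (n : ℝ) + α + (β - 1) + 1 = (n : ℝ) + α + β from by ring,
    show x + γ + (δ + 1) + 1 = x + γ + δ + 2 from by ring,
    show β - 1 + (δ + 1) + 1 = β + δ + 1 from by ring]


/-- The four-term mixed recurrence-difference relation for the Racah polynomials. -/
theorem racah_four_term_relation (n : ℕ) (x α β γ δ : ℝ)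
    (hn : 2 * (n : ℝ) + α + β ≠ 0) (hx : 2 * x + γ + δ + 1 ≠ 0)
    (hα : ∀ k ≤ n, poch (α + 1) k ≠ 0)
    (hβδ : ∀ k ≤ n, poch (β + δ + 1) k ≠ 0)
    (hγ : ∀ k ≤ n, poch (γ + 1) k ≠ 0) :
    0 = (n : ℝ) / (2 * (n : ℝ) + α + β) * racah (n - 1) x α β γ δ
        + ((n : ℝ) + α + β) / (2 * (n : ℝ) + α + β) * racah n x α β γ δ
        - x / (2 * x + γ + δ + 1) * racah n (x - 1) α (β - 1) γ (δ + 1)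
        - (x + γ + δ + 1) / (2 * x + γ + δ + 1) * racah n x α (β - 1) γ (δ + 1) := by
  set T : ℝ := ∑ k ∈ Finset.range (n + 1),
      poch (-(n : ℝ)) k * poch ((n : ℝ) + α + β) k * poch (-x) k *
          poch (x + γ + δ + 1) k /
        (poch (α + 1) k * poch (β + δ + 1) k * poch (γ + 1) k * (Nat.factorial k : ℝ)) with hT
  have hA : (n : ℝ) / (2 * (n : ℝ) + α + β) * racah (n - 1) x α β γ δ
      + ((n : ℝ) + α + β) / (2 * (n : ℝ) + α + β) * racah n x α β γ δ = T := by
    rw [racah_pred, hT]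
    unfold racah
    rw [Finset.mul_sum, Finset.mul_sum, ← Finset.sum_add_distrib]
    apply Finset.sum_congr rfl
    intro k hk
    have hk' : k ≤ n := Finset.mem_range_succ_iff.mp hk
    have hD : poch (α + 1) k * poch (β + δ + 1) k * poch (γ + 1) k * (Nat.factorial k : ℝ) ≠ 0 := by
      have hf : (Nat.factorial k : ℝ) ≠ 0 := Nat.cast_ne_zero.mpr k.factorial_ne_zero
      exact mul_ne_zero (mul_ne_zero (mul_ne_zero (hα k hk') (hβδ k hk')) (hγ k hk')) hf
    have K1 : (n : ℝ) * poch (1 - (n : ℝ)) k = poch (-(n : ℝ)) k * ((n : ℝ) - k) := by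
      have h := poch_key (-(n : ℝ)) k
      rw [show -(n : ℝ) + 1 = 1 - (n : ℝ) from by ring] at h
      linear_combination -h
    have K2 : ((n : ℝ) + α + β) * poch ((n : ℝ) + α + β + 1) k
        = poch ((n : ℝ) + α + β) k * ((n : ℝ) + α + β + k) := poch_key _ k
    rw [mul_div_assoc', mul_div_assoc', ← add_div]
    congr 1
    field_simp
    rw [div_eq_iff (by rwa [show (n:ℝ)*2+α+β = 2*n+α+β by ring])]
    linear_combination (poch ((n:ℝ)+α+β) k * poch (-x) k * poch (x+γ+δ+1) k) * K1
      + (poch (-(n:ℝ)) k * poch (-x) k * poch (x+γ+δ+1) k) * K2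
  have hB : x / (2 * x + γ + δ + 1) * racah n (x - 1) α (β - 1) γ (δ + 1)
      + (x + γ + δ + 1) / (2 * x + γ + δ + 1) * racah n x α (β - 1) γ (δ + 1) = T := by
    rw [racah_shift3, racah_shift4, hT]
    rw [Finset.mul_sum, Finset.mul_sum, ← Finset.sum_add_distrib]
    apply Finset.sum_congr rfl
    intro k hk
    have hk' : k ≤ n := Finset.mem_range_succ_iff.mp hk
    have hD : poch (α + 1) k * poch (β + δ + 1) k * poch (γ + 1) k * (Nat.factorial k : ℝ) ≠ 0 := by
      have hf : (Nat.factorial k : ℝ) ≠ 0 := Nat.cast_ne_zero.mpr k.factorial_ne_zero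
      exact mul_ne_zero (mul_ne_zero (mul_ne_zero (hα k hk') (hβδ k hk')) (hγ k hk')) hf
    have K3 : x * poch (1 - x) k = poch (-x) k * (x - k) := by
      have h := poch_key (-x) k
      rw [show -x + 1 = 1 - x from by ring] at h
      linear_combination -h
    have K4 : (x + γ + δ + 1) * poch (x + γ + δ + 2) k
        = poch (x + γ + δ + 1) k * (x + γ + δ + 1 + k) := by
      have h := poch_key (x + γ + δ + 1) k
      rw [show x + γ + δ + 1 + 1 = x + γ + δ + 2 from by ring] at h
      exact h
    rw [mul_div_assoc', mul_div_assoc', ← add_div]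
    congr 1
    field_simp
    rw [div_eq_iff (by rwa [show x*2+γ+δ+1 = 2*x+γ+δ+1 by ring])]
    linear_combination (poch (-(n:ℝ)) k * poch ((n:ℝ)+α+β) k * poch (x+γ+δ+1) k) * K3
      + (poch (-(n:ℝ)) k * poch ((n:ℝ)+α+β) k * poch (-x) k) * K4
  linarith
end
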